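/- Let V be an infinite-dimensional 𝔽₂-vector space with basis B, let n ≥ 3 be odd, and let I be a nonzero vector that is a sum of an even number of elements of B. Then the minimal n-closed subset of V containing I together with all sums of odd numbers of elements of B equals V∖{0}. -/

import Mathlib

/-- A subset `S` of an `𝔽₂`-vector space is `n`-closed if it contains the sum of any
`n` linearly independent elements of `S`. -/
def NClosed {V : Type*} [AddCommGroup V] [Module (ZMod 2) V] (n : ℕ) (S : Set V) : Prop :=
  ∀ f : Fin n → V, (∀ i, f i ∈ S) → LinearIndependent (ZMod 2) f → (∑ i, f i) ∈ S

section Aux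

variable {V : Type*} [AddCommGroup V] [Module (ZMod 2) V] {ι : Type*}

lemma char2_add_self (x : V) : x + x = 0 := by
  have h : (2 : ZMod 2) • x = x + x := two_smul _ x
  rw [show (2 : ZMod 2) = 0 by decide, zero_smul] at h
  exact h.symm

/-- parity of the number of basis vectors -/
noncomputable def par (b : Module.Basis ι (ZMod 2) V) (v : V) : ZMod 2 :=
  (b.repr v).sum fun _ x => x

lemma par_eq_card (b : Module.Basis ι (ZMod 2) V) (v : V) :
    par b v = ((b.repr v).support.card : ZMod 2) := by
  rw [par, Finsupp.sum]
  rw [Finset.sum_congr rfl (fun i hi => ?_), Finset.sum_const, nsmul_eq_mul, mul_one]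
  have h : (b.repr v) i ≠ 0 := Finsupp.mem_support_iff.mp hi
  revert h; generalize (b.repr v) i = x; revert x; decide

lemma par_add (b : Module.Basis ι (ZMod 2) V) (x y : V) :
    par b (x + y) = par b x + par b y := by
  unfold par
  rw [map_add, Finsupp.sum_add_index' (fun _ => rfl) (fun _ _ _ => rfl)]

lemma par_basis (b : Module.Basis ι (ZMod 2) V) (i : ι) : par b (b i) = 1 := by
  unfold par
  rw [b.repr_self, Finsupp.sum_single_index rfl]

lemma natCast_zmod2 (k : ℕ) :
    ((k : ZMod 2) = 0 ↔ k % 2 = 0) ∧ ((k : ZMod 2) = 1 ↔ k % 2 = 1) := by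
  rw [← ZMod.natCast_mod k 2]
  have h : k % 2 = 0 ∨ k % 2 = 1 := by omega
  rcases h with h | h <;> rw [h] <;> simp <;> omega

lemma even_iff_par (b : Module.Basis ι (ZMod 2) V) (v : V) :
    Even (b.repr v).support.card ↔ par b v = 0 := by
  rw [par_eq_card, Nat.even_iff, (natCast_zmod2 _).1]

lemma odd_iff_par (b : Module.Basis ι (ZMod 2) V) (v : V) :
    Odd (b.repr v).support.card ↔ par b v = 1 := by
  rw [par_eq_card, Nat.odd_iff, (natCast_zmod2 _).2]

end Aux

section Key

variable {V : Type*} [AddCommGroup V] [Module (ZMod 2) V] {ι : Type*} [Infinite ι]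

lemma par_zero (b : Module.Basis ι (ZMod 2) V) : par b (0 : V) = 0 := by
  simp [par]

lemma par_sum (b : Module.Basis ι (ZMod 2) V) {α : Type*} (s : Finset α) (f : α → V) :
    par b (∑ a ∈ s, f a) = ∑ a ∈ s, par b (f a) :=
  map_sum (⟨⟨par b, par_zero b⟩, par_add b⟩ : V →+ ZMod 2) f s

lemma fin_peel {M : Type*} [AddCommMonoid M] (k : ℕ) (F : Fin (k+3) → M) :
    ∑ i, F i = F 0 + ((∑ j : Fin (k+1), F ((Fin.castSucc j).succ)) +
      F ((Fin.last (k+1)).succ)) := by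
  rw [Fin.sum_univ_succ, Fin.sum_univ_castSucc]

lemma zmod2_cases (a : ZMod 2) : a = 0 ∨ a = 1 := by revert a; decide

lemma key (b : Module.Basis ι (ZMod 2) V) (k : ℕ) (hk : Even k)
    (I : V) (hI : I ≠ 0) (hIpar : par b I = 0)
    (S : Set V) (hIS : I ∈ S) (hoddS : ∀ w : V, par b w = 1 → w ∈ S)
    (hS : NClosed (k+3) S) (v : V) (hv : v ≠ 0) (hvI : v ≠ I) (hvpar : par b v = 0) :
    v ∈ S := by
  classical
  set u : V := v + I with hu_def
  have hIu : I + u = v := by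
    rw [hu_def, add_comm v I, ← add_assoc, char2_add_self, zero_add]
  have hu0 : u ≠ 0 := by
    intro h
    apply hvI
    rw [← hIu, h, add_zero]
  have huI : u ≠ I := by
    intro h
    apply hv
    rw [← hIu, h, char2_add_self]
  have hupar : par b u = 0 := by rw [hu_def, par_add, hvpar, hIpar, add_zero]
  -- fresh indices
  have hfin : (↑((b.repr u).support ∪ (b.repr I).support) : Set ι).Finite :=
    Finset.finite_toSet _
  obtain ⟨t, hts, htc⟩ := hfin.infinite_compl.exists_subset_card_eq (k+1)
  let e := t.equivFinOfCardEq htc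
  let c : Fin (k+1) → ι := fun j => (e.symm j : ι)
  have hcinj : Function.Injective c :=
    Subtype.val_injective.comp e.symm.injective
  have hcfresh : ∀ j, b.repr u (c j) = 0 ∧ b.repr I (c j) = 0 := by
    intro j
    have hmem : c j ∈ t := (e.symm j).2
    have := hts hmem
    simp only [Set.mem_compl_iff, Finset.coe_union, Set.mem_union, Finset.mem_coe,
      Finsupp.mem_support_iff, not_or, not_not] at this
    exact this
  set w : V := u + ∑ j : Fin (k+1), b (c j) with hw_def
  have hwpar : par b w = 1 := by
    rw [hw_def, par_add, hupar, zero_add, par_sum]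
    simp only [par_basis]
    rw [Finset.sum_const, Finset.card_univ, Fintype.card_fin, nsmul_eq_mul, mul_one]
    exact (natCast_zmod2 (k+1)).2.mpr (by have := Nat.even_iff.mp hk; omega)
  set g : Fin (k+3) → V := Fin.cons I (Fin.snoc (fun j => b (c j)) w) with hg_def
  have hg0 : g 0 = I := rfl
  have hgmid : ∀ j : Fin (k+1), g ((Fin.castSucc j).succ) = b (c j) := by
    intro j
    rw [hg_def]
    rw [Fin.cons_succ, Fin.snoc_castSucc]
  have hglast : g ((Fin.last (k+1)).succ) = w := by
    rw [hg_def, Fin.cons_succ, Fin.snoc_last]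
  have hgsum : ∑ i, g i = v := by
    rw [fin_peel, hg0, hglast]
    rw [Finset.sum_congr rfl (fun j _ => hgmid j)]
    rw [hw_def]
    have h2 : I + ((∑ j : Fin (k+1), b (c j)) + (u + ∑ j : Fin (k+1), b (c j)))
        = (I + u) + ((∑ j : Fin (k+1), b (c j)) + (∑ j : Fin (k+1), b (c j))) := by
      abel
    rw [h2, char2_add_self, add_zero, hIu]
  have hgmem : ∀ i, g i ∈ S := by
    intro i
    induction i using Fin.cases with
    | zero => exact hIS
    | succ i =>
      induction i using Fin.lastCases with
      | last => rw [hglast]; exact hoddS w hwpar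
      | cast j => rw [hgmid j]; exact hoddS _ (par_basis b (c j))
  have hgli : LinearIndependent (ZMod 2) g := by
    rw [Fintype.linearIndependent_iff]
    intro κ hκ
    rw [fin_peel k (fun i => κ i • g i), hg0, hglast] at hκ
    rw [Finset.sum_congr rfl (fun j _ => by rw [hgmid j])] at hκ
    -- evaluate coordinates at c j₀
    have hmid : ∀ j₀ : Fin (k+1), κ ((Fin.castSucc j₀).succ) = κ ((Fin.last (k+1)).succ) := by
      intro j₀
      have h := congrArg (fun x => b.repr x (c j₀)) hκ
      simp only [map_add, map_smul, map_sum, map_zero, Finsupp.add_apply, Finsupp.smul_apply,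
        Finsupp.coe_zero, Pi.zero_apply, Finset.sum_apply', b.repr_self,
        Finsupp.single_apply, smul_eq_mul] at h
      rw [(hcfresh j₀).2, mul_zero, zero_add] at h
      have hδ : ∀ j : Fin (k+1), (if c j = c j₀ then (1 : ZMod 2) else 0)
          = if j = j₀ then 1 else 0 := by
        intro j
        by_cases hj : j = j₀
        · simp [hj]
        · rw [if_neg (fun h' => hj (hcinj h')), if_neg hj]
      have hrw : b.repr w (c j₀) = 1 := by
        rw [hw_def, map_add, map_sum, Finsupp.add_apply, (hcfresh j₀).1, zero_add,
          Finset.sum_apply', Finset.sum_congr rfl (fun j _ => by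
            rw [b.repr_self, Finsupp.single_apply, hδ j])]
        simp
      rw [hrw, mul_one] at h
      have h' : (∑ j : Fin (k+1), κ ((Fin.castSucc j).succ) * (if c j = c j₀ then (1:ZMod 2) else 0))
          = κ ((Fin.castSucc j₀).succ) := by
        rw [Finset.sum_congr rfl (fun j _ => by rw [hδ j, mul_ite, mul_one, mul_zero])]
        exact Finset.sum_ite_eq' Finset.univ j₀ _ |>.trans (by simp)
      rw [h'] at h
      have : ∀ a c : ZMod 2, a + c = 0 → a = c := by decide
      exact this _ _ h
    rcases zmod2_cases (κ ((Fin.last (k+1)).succ)) with hlast | hlast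
    · -- all coefficients zero
      have hmid0 : ∀ j : Fin (k+1), κ ((Fin.castSucc j).succ) = 0 := fun j =>
        (hmid j).trans hlast
      rw [hlast, zero_smul, add_zero] at hκ
      rw [Finset.sum_congr rfl (fun j _ => by rw [hmid0 j, zero_smul]),
        Finset.sum_const_zero, add_zero] at hκ
      have h0 : κ 0 = 0 := by
        rcases zmod2_cases (κ 0) with h | h
        · exact h
        · rw [h, one_smul] at hκ; exact absurd hκ hI
      intro i
      induction i using Fin.cases with
      | zero => exact h0
      | succ i =>
        induction i using Fin.lastCases with
        | last => exact hlast
        | cast j => exact hmid0 j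
    · -- contradiction
      exfalso
      have hmid1 : ∀ j : Fin (k+1), κ ((Fin.castSucc j).succ) = 1 := fun j =>
        (hmid j).trans hlast
      rw [hlast, one_smul] at hκ
      rw [Finset.sum_congr rfl (fun j _ => by rw [hmid1 j, one_smul])] at hκ
      rw [hw_def] at hκ
      have h2 : κ 0 • I + ((∑ j : Fin (k+1), b (c j)) + (u + ∑ j : Fin (k+1), b (c j)))
          = (κ 0 • I + u) + ((∑ j : Fin (k+1), b (c j)) + (∑ j : Fin (k+1), b (c j))) := by
        abel
      rw [h2, char2_add_self, add_zero] at hκ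
      rcases zmod2_cases (κ 0) with h | h
      · rw [h, zero_smul, zero_add] at hκ
        exact hu0 hκ
      · rw [h, one_smul, hIu] at hκ
        exact hv hκ
  have := hS g hgmem hgli
  rwa [hgsum] at this

end Key

/-- Let `V` be an infinite-dimensional `𝔽₂`-vector space with basis `B`, `n ≥ 3` odd,
and `I ≠ 0` a sum of an even number of elements of `B`. The minimal `n`-closed subset
of `V` containing `I` together with all sums of odd numbers of elements of `B` is
`V ∖ {0}`. -/
theorem nClosure_of_odd_sums_and_even_vector {V : Type*} [AddCommGroup V]
    [Module (ZMod 2) V] {ι : Type*} [Infinite ι] (b : Module.Basis ι (ZMod 2) V)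
    (n : ℕ) (hn : 3 ≤ n) (hodd : Odd n)
    (I : V) (hI : I ≠ 0) (hIeven : Even (b.repr I).support.card) :
    ⋂₀ {S : Set V |
        {I} ∪ {v : V | Odd (b.repr v).support.card} ⊆ S ∧ NClosed n S} =
      {v : V | v ≠ 0} := by
  ext v
  simp only [Set.mem_sInter, Set.mem_setOf_eq]
  constructor
  · intro h
    refine h {x | x ≠ 0} ⟨?_, ?_⟩
    · rintro x hx
      rcases hx with hx | hx
      · rw [Set.mem_singleton_iff] at hx
        rw [hx]; exact hI
      · intro h0
        rw [Set.mem_setOf_eq, h0] at hx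
        simp at hx
    · intro f hf hli
      intro h0
      have h1 := Fintype.linearIndependent_iff.mp hli (fun _ => 1)
        (by simpa using h0) ⟨0, by omega⟩
      exact one_ne_zero h1
  · intro hv S hs
    obtain ⟨hsub, hcl⟩ := hs
    by_cases hvodd : Odd (b.repr v).support.card
    · exact hsub (Set.mem_union_right _ hvodd)
    · by_cases hvI : v = I
      · exact hvI ▸ hsub (Set.mem_union_left _ rfl)
      · obtain ⟨k, rfl⟩ : ∃ k, n = k + 3 := ⟨n - 3, by omega⟩
        have hk : Even k := by
          rw [Nat.odd_iff] at hodd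
          rw [Nat.even_iff]
          omega
        exact key b k hk I hI ((even_iff_par b I).mp hIeven) S
          (hsub (Set.mem_union_left _ rfl))
          (fun w hw => hsub (Set.mem_union_right _ ((odd_iff_par b w).mpr hw)))
          hcl v hv hvI
          ((even_iff_par b v).mp (Nat.not_odd_iff_even.mp hvodd))
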